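/- Let τ ≥ 0. Assume H is Hermitian, Π is an orthogonal projection (Π² = Π = Πᴴ) with complement Π^⊥ := 1 − Π, H̃ := ΠHΠ, H₀ is a matrix such that H − H₀ commutes with Π, ρ is PSD, and O is Hermitian. Then | tr[ exp(iτH)·O·( exp(−iτH) − exp(−iτH̃) )·ρ ] | ≤ ‖Π^⊥·√ρ‖_F·( ‖Π^⊥·exp(iτH)·O·exp(−iτH)·√ρ‖_F + ‖Π^⊥·O·exp(−iτH)·√ρ‖_F ) + ∫₀^τ ‖√ρ·exp(iτH)·O·exp(−iτ₁H)·Π^⊥‖_F · ‖Π^⊥·H₀·Π·exp(−i(τ−τ₁)H̃)·√ρ‖_F dτ₁. -/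

import Mathlib

open scoped Matrix ComplexOrder

/-- The positive semidefinite square root of a positive semidefinite matrix
(the definition of the older Mathlib, since removed there). -/
noncomputable def Matrix.PosSemidef.sqrt {n 𝕜 : Type*} [Fintype n] [RCLike 𝕜] [DecidableEq n]
    {A : Matrix n n 𝕜} (hA : A.PosSemidef) : Matrix n n 𝕜 :=
  hA.1.eigenvectorUnitary.1 * Matrix.diagonal ((↑) ∘ (√·) ∘ hA.1.eigenvalues) *
  (star hA.1.eigenvectorUnitary : Matrix n n 𝕜)

/-- Frobenius norm `‖A‖_F = √(tr (Aᴴ A))`. -/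
noncomputable def frobNorm {n : ℕ} (A : Matrix (Fin n) (Fin n) ℂ) : ℝ :=
  Real.sqrt ((Aᴴ * A).trace.re)

namespace Stmt12Aux

variable {n : ℕ}

lemma psd_sqrt_herm {A : Matrix (Fin n) (Fin n) ℂ} (hA : A.PosSemidef) : (hA.sqrt)ᴴ = hA.sqrt := by
  unfold Matrix.PosSemidef.sqrt
  simp [Matrix.conjTranspose_mul, Matrix.diagonal_conjTranspose, Matrix.mul_assoc, Function.comp_def,
    Matrix.star_eq_conjTranspose, Pi.star_def, Complex.conj_ofReal]

lemma psd_sqrt_mul_self {A : Matrix (Fin n) (Fin n) ℂ} (hA : A.PosSemidef) :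
    hA.sqrt * hA.sqrt = A := by
  have hU : (star hA.1.eigenvectorUnitary : Matrix (Fin n) (Fin n) ℂ)
      * hA.1.eigenvectorUnitary.1 = 1 :=
    Unitary.coe_star_mul_self _
  have hd : Matrix.diagonal ((RCLike.ofReal ∘ (√·) ∘ hA.1.eigenvalues) : Fin n → ℂ)
      * Matrix.diagonal (RCLike.ofReal ∘ (√·) ∘ hA.1.eigenvalues)
      = Matrix.diagonal (RCLike.ofReal ∘ hA.1.eigenvalues) := by
    rw [Matrix.diagonal_mul_diagonal]
    congr 1; funext i
    simp only [Function.comp_apply]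
    rw [← RCLike.ofReal_mul, Real.mul_self_sqrt (hA.eigenvalues_nonneg i)]
  unfold Matrix.PosSemidef.sqrt
  conv_rhs => rw [hA.1.spectral_theorem]
  rw [Unitary.conjStarAlgAut_apply]
  calc _ = hA.1.eigenvectorUnitary.1
      * (Matrix.diagonal ((RCLike.ofReal ∘ (√·) ∘ hA.1.eigenvalues) : Fin n → ℂ)
      * ((star hA.1.eigenvectorUnitary : Matrix (Fin n) (Fin n) ℂ) * hA.1.eigenvectorUnitary.1)
      * Matrix.diagonal (RCLike.ofReal ∘ (√·) ∘ hA.1.eigenvalues))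
      * (star hA.1.eigenvectorUnitary : Matrix (Fin n) (Fin n) ℂ) := by
        simp only [Matrix.mul_assoc]
    _ = _ := by rw [hU, Matrix.mul_one, hd]

/-! ### Frobenius norm and Cauchy–Schwarz (instance-free part) -/

lemma trace_mul_eq (A B : Matrix (Fin n) (Fin n) ℂ) :
    (A * B).trace = ∑ p : Fin n × Fin n, A p.1 p.2 * B p.2 p.1 := by
  simp [Matrix.trace, Matrix.mul_apply, Matrix.diag, Fintype.sum_prod_type]

lemma sum_swap_norm (A : Matrix (Fin n) (Fin n) ℂ) :
    ∑ p : Fin n × Fin n, ‖A p.1 p.2‖ ^ 2 = ∑ p : Fin n × Fin n, ‖A p.2 p.1‖ ^ 2 :=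
  Equiv.sum_comp (Equiv.prodComm (Fin n) (Fin n)) (fun p => ‖A p.2 p.1‖ ^ 2)

lemma frobNorm_eq (A : Matrix (Fin n) (Fin n) ℂ) :
    frobNorm A = Real.sqrt (∑ p : Fin n × Fin n, ‖A p.1 p.2‖ ^ 2) := by
  rw [frobNorm, trace_mul_eq]
  have h : ∀ p : Fin n × Fin n, Aᴴ p.1 p.2 * A p.2 p.1 = ((‖A p.2 p.1‖ ^ 2 : ℝ) : ℂ) :=
    fun p => by
      rw [Matrix.conjTranspose_apply, Complex.star_def, mul_comm, Complex.mul_conj]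
      rw [Complex.normSq_eq_norm_sq]
  rw [Finset.sum_congr rfl fun p _ => h p, ← Complex.ofReal_sum, Complex.ofReal_re,
    sum_swap_norm]

lemma frobNorm_nonneg (A : Matrix (Fin n) (Fin n) ℂ) : 0 ≤ frobNorm A :=
  Real.sqrt_nonneg _

lemma frobNorm_conjTranspose (A : Matrix (Fin n) (Fin n) ℂ) : frobNorm Aᴴ = frobNorm A := by
  rw [frobNorm_eq, frobNorm_eq, sum_swap_norm]
  congr 1
  refine Finset.sum_congr rfl fun p _ => ?_
  rw [Matrix.conjTranspose_apply]
  simp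

lemma cs (A B : Matrix (Fin n) (Fin n) ℂ) :
    ‖ (A * B).trace‖ ≤ frobNorm A * frobNorm B := by
  classical
  set x : EuclideanSpace ℂ (Fin n × Fin n) :=
    WithLp.toLp 2 (fun p => (starRingEnd ℂ) (A p.1 p.2)) with hx
  set y : EuclideanSpace ℂ (Fin n × Fin n) := WithLp.toLp 2 (fun p => B p.2 p.1) with hy
  have h1 : (A * B).trace = inner (𝕜 := ℂ) x y := by
    rw [trace_mul_eq, PiLp.inner_apply]
    refine Finset.sum_congr rfl fun p _ => ?_
    simp [hx, hy, RCLike.inner_apply, mul_comm]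
  have h2 : ‖x‖ = frobNorm A := by
    rw [EuclideanSpace.norm_eq, frobNorm_eq]
    congr 1
    refine Finset.sum_congr rfl fun p _ => ?_
    simp [hx]
  have h3 : ‖y‖ = frobNorm B := by
    rw [EuclideanSpace.norm_eq, frobNorm_eq, sum_swap_norm]
  calc ‖(A*B).trace‖ = ‖(A*B).trace‖ := rfl
    _ ≤ ‖x‖ * ‖y‖ := by rw [h1]; exact norm_inner_le_norm _ _
    _ = frobNorm A * frobNorm B := by rw [h2, h3]

/-! ### Calculus part (with local normed instances) -/

section Normed

open NormedSpace

attribute [local instance] Matrix.linftyOpNormedRing Matrix.linftyOpNormedAlgebra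

local notation "M" => Matrix (Fin n) (Fin n) ℂ

lemma exp_mul_eq_of_mul_eq_zero (A B : M) (h : A * B = 0) :
    exp A * B = B := by
  have hs := ((NormedSpace.exp_series_hasSum_exp' (𝕂 := ℂ) A).mul_right B).unique
    (hasSum_single 0 ?_)
  · exact hs.trans (by simp)
  · intro k hk
    obtain ⟨m, rfl⟩ := Nat.exists_eq_succ_of_ne_zero hk
    beta_reduce
    rw [smul_mul_assoc, pow_succ, mul_assoc, h, mul_zero, smul_zero]

lemma mul_exp_eq_of_mul_eq_zero (A B : M) (h : B * A = 0) :
    B * exp A = B := by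
  have hs := ((NormedSpace.exp_series_hasSum_exp' (𝕂 := ℂ) A).mul_left B).unique
    (hasSum_single 0 ?_)
  · exact hs.trans (by simp)
  · intro k hk
    obtain ⟨m, rfl⟩ := Nat.exists_eq_succ_of_ne_zero hk
    beta_reduce
    rw [mul_smul_comm, pow_succ', ← mul_assoc, h, zero_mul, smul_zero]

lemma hasDerivAt_exp_real (X : M) (t : ℝ) :
    HasDerivAt (fun u : ℝ => exp (u • X)) (exp (t • X) * X) t := by
  have h := hasDerivAt_exp_smul_const (𝕂 := ℝ) X t
  exact h

lemma continuous_exp_real (X : M) : Continuous (fun u : ℝ => exp (u • X)) :=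
  continuous_iff_continuousAt.2 fun t => (hasDerivAt_exp_real X t).continuousAt

lemma smul_conv (t : ℝ) (X : M) :
    (-(Complex.I * (t : ℂ))) • X = t • ((-Complex.I) • X) := by
  rw [← smul_assoc]
  congr 1
  show -(Complex.I * (t:ℂ)) = t • -Complex.I
  rw [Complex.real_smul]
  ring

lemma smul_conv2 (τ t : ℝ) (X : M) :
    (-(Complex.I * ((τ : ℂ) - (t : ℂ)))) • X = (τ - t) • ((-Complex.I) • X) := by
  rw [← smul_conv]
  norm_cast

lemma duhamel (τ : ℝ) (H P H₀ : M)
    (hP2 : P * P = P) (hcomm : (H - H₀) * P = P * (H - H₀)) :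
    exp (τ • ((-Complex.I) • H)) * P - exp (τ • ((-Complex.I) • (P * H * P))) * P
      = ∫ t in (0:ℝ)..τ, (-Complex.I) •
          (exp (t • ((-Complex.I) • H)) * (((1:M) - P) * H₀ * P)
            * exp ((τ - t) • ((-Complex.I) • (P * H * P)))) := by
  set A : M := (-Complex.I) • H with hA
  set B : M := (-Complex.I) • (P * H * P) with hB
  set Q : M := (1:M) - P with hQ
  set C : M := Q * H₀ * P with hC
  have hHtP : (P * H * P) * P = P * H * P := by rw [mul_assoc, hP2]
  have hPHt : P * (P * H * P) = P * H * P := by rw [← mul_assoc, ← mul_assoc, hP2]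
  have hBQ : B * Q = 0 := by
    rw [hB, hQ, smul_mul_assoc, mul_sub, mul_one, hHtP, sub_self, smul_zero]
  have hQB : Q * B = 0 := by
    rw [hB, hQ, mul_smul_comm, sub_mul, one_mul, hPHt, sub_self, smul_zero]
  have hWQ : ∀ s : ℝ, exp (s • B) * Q = Q := fun s =>
    exp_mul_eq_of_mul_eq_zero _ _ (by rw [smul_mul_assoc, hBQ, smul_zero])
  have hQW : ∀ s : ℝ, Q * exp (s • B) = Q := fun s =>
    mul_exp_eq_of_mul_eq_zero _ _ (by rw [mul_smul_comm, hQB, smul_zero])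
  have hWP : ∀ s : ℝ, exp (s • B) * P = P * exp (s • B) := fun s => by
    have h1 : exp (s • B) * P = exp (s • B) - Q := by
      have : P = 1 - Q := by rw [hQ]; abel
      rw [this, mul_sub, mul_one, hWQ]
    have h2 : P * exp (s • B) = exp (s • B) - Q := by
      have : P = 1 - Q := by rw [hQ]; abel
      rw [this, sub_mul, one_mul, hQW]
    rw [h1, h2]
  have hWB : ∀ s : ℝ, exp (s • B) * B = B * exp (s • B) := fun s =>
    (((Commute.refl B).smul_left s).exp_left)
  have hQHP : A * P - B * P = (-Complex.I) • C := by
    have h0 : Q * (H - H₀) * P = 0 := by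
      rw [hQ, sub_mul, one_mul, sub_mul, hcomm, mul_assoc, hcomm, ← mul_assoc, hP2, sub_self]
    have h2 : Q * H * P = Q * H₀ * P := by
      rw [← sub_eq_zero]
      have hh : Q * H * P - Q * H₀ * P = Q * (H - H₀) * P := by noncomm_ring
      rw [hh, h0]
    have h1 : H * P - (P * H * P) * P = C := by
      rw [hHtP, hC, ← h2, hQ]; noncomm_ring
    rw [hA, hB, smul_mul_assoc, smul_mul_assoc, ← smul_sub, h1]
  have key : ∀ (E W : M), W * P = P * W → W * B = B * W →
      E * A * (W * P) + E * (-(W * B) * P)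
        = (-Complex.I) • (E * C * W) := by
    intro E W hWP' hWB'
    calc E * A * (W * P) + E * (-(W * B) * P)
        = E * ((A * P - B * P) * W) := by
          rw [hWB', neg_mul, mul_assoc B W P, hWP', ← mul_assoc B P W]
          noncomm_ring
      _ = (-Complex.I) • (E * C * W) := by
          rw [hQHP, smul_mul_assoc, mul_smul_comm]
          congr 1
          rw [hC]; noncomm_ring
  set g : ℝ → M := fun t => exp (t • A) * (exp ((τ - t) • B) * P) with hg
  have hderiv : ∀ t ∈ Set.uIcc (0:ℝ) τ, HasDerivAt g
      ((-Complex.I) • (exp (t • A) * C * exp ((τ - t) • B))) t := by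
    intro t _
    have h1 := hasDerivAt_exp_real A t
    have hu : HasDerivAt (fun u : ℝ => τ - u) (-1) t := (hasDerivAt_id t).const_sub τ
    have h2 : HasDerivAt (fun u : ℝ => exp ((τ - u) • B))
        ((-1 : ℝ) • (exp ((τ - t) • B) * B)) t :=
      (hasDerivAt_exp_real B (τ - t)).scomp t hu
    have h3 := h2.mul_const P
    have h4 := h1.mul h3
    rw [← key (exp (t • A)) (exp ((τ - t) • B)) (hWP (τ - t)) (hWB (τ - t))]
    rw [neg_one_smul ℝ] at h4
    exact h4
  have hcont : Continuous fun t : ℝ => (-Complex.I) •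
      (exp (t • A) * C * exp ((τ - t) • B)) := by
    exact Continuous.const_smul (((continuous_exp_real A).mul continuous_const).mul
      ((continuous_exp_real B).comp (continuous_const.sub continuous_id))) (-Complex.I)
  have := intervalIntegral.integral_eq_sub_of_hasDerivAt hderiv
    (hcont.intervalIntegrable 0 τ)
  rw [this]
  rw [hg]
  simp only [sub_self, zero_smul, NormedSpace.exp_zero, one_mul, mul_one, sub_zero]

/-- continuity of `t ↦ frobNorm (f t)` -/
lemma continuous_frobNorm_comp {f : ℝ → M} (hf : Continuous f) :
    Continuous fun t => frobNorm (f t) := by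
  have hent : ∀ p : Fin n × Fin n, Continuous fun A : M => A p.1 p.2 := by
    intro p
    let l : M →ₗ[ℂ] ℂ :=
      { toFun := fun A : M => A p.1 p.2
        map_add' := fun _ _ => rfl
        map_smul' := fun _ _ => rfl }
    exact l.continuous_of_finiteDimensional
  simp only [frobNorm_eq]
  exact Real.continuous_sqrt.comp <| continuous_finset_sum _ fun p _ =>
    (((hent p).comp hf).norm.pow 2)

/-- The Duhamel-term bound. -/
lemma T3bound (τ : ℝ) (hτ : 0 ≤ τ) (H P H₀ X R : M)
    (hP2 : P * P = P) (hcomm : (H - H₀) * P = P * (H - H₀))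
    (g : ℝ → ℝ) (hgc : Continuous g)
    (hb : ∀ t : ℝ, ‖ (X *
        (exp ((-(Complex.I * (t : ℂ))) • H) * (((1:M) - P) * H₀ * P)
          * exp ((-(Complex.I * ((τ : ℂ) - (t : ℂ)))) • (P * H * P))) * R).trace‖ ≤ g t) :
    ‖ (X * (exp ((-(Complex.I * (τ : ℂ))) • H) * P
        - exp ((-(Complex.I * (τ : ℂ))) • (P * H * P)) * P) * R).trace‖
      ≤ ∫ t in (0:ℝ)..τ, g t := by
  set C : M := ((1:M) - P) * H₀ * P with hC
  set k : ℝ → M := fun t => (-Complex.I) •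
      (exp (t • ((-Complex.I) • H)) * C
        * exp ((τ - t) • ((-Complex.I) • (P * H * P)))) with hk
  have hkcont : Continuous k := by
    exact Continuous.const_smul (((continuous_exp_real ((-Complex.I) • H)).mul continuous_const).mul
      ((continuous_exp_real ((-Complex.I) • (P * H * P))).comp
        (continuous_const.sub continuous_id))) (-Complex.I)
  have hM : exp ((-(Complex.I * (τ : ℂ))) • H) * P
      - exp ((-(Complex.I * (τ : ℂ))) • (P * H * P)) * P
      = ∫ t in (0:ℝ)..τ, k t := by
    rw [smul_conv τ H, smul_conv τ (P * H * P)]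
    exact duhamel τ H P H₀ hP2 hcomm
  -- the continuous linear functional Y ↦ tr (X * Y * R)
  set Lmap : M →ₗ[ℂ] ℂ :=
    { toFun := fun Y => (X * Y * R).trace
      map_add' := fun Y Z => by
        show (X * (Y + Z) * R).trace = (X * Y * R).trace + (X * Z * R).trace
        rw [mul_add, add_mul, Matrix.trace_add]
      map_smul' := fun c Y => by
        show (X * (c • Y) * R).trace = c • (X * Y * R).trace
        rw [mul_smul_comm, smul_mul_assoc, Matrix.trace_smul] } with hLmap
  set L : M →L[ℂ] ℂ := LinearMap.toContinuousLinearMap Lmap with hL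
  have hLapp : ∀ Y : M, L Y = (X * Y * R).trace := fun Y => rfl
  rw [hM]
  have hswap : (X * (∫ t in (0:ℝ)..τ, k t) * R).trace = ∫ t in (0:ℝ)..τ, L (k t) := by
    rw [← hLapp]
    exact (L.intervalIntegral_comp_comm (hkcont.intervalIntegrable 0 τ)).symm
  have habs : ∀ z : ℂ, ‖z‖ = ‖z‖ := fun z => rfl
  rw [hswap, habs]
  refine le_trans (intervalIntegral.norm_integral_le_integral_norm hτ) ?_
  refine intervalIntegral.integral_mono_on hτ
    ((L.continuous.comp hkcont).norm.intervalIntegrable 0 τ)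
    (hgc.intervalIntegrable 0 τ) (fun t _ => ?_)
  have : L (k t) = (-Complex.I) * ((X *
      (exp ((-(Complex.I * (t : ℂ))) • H) * C
        * exp ((-(Complex.I * ((τ : ℂ) - (t : ℂ)))) • (P * H * P))) * R).trace) := by
    rw [hk]
    simp only [map_smul, smul_eq_mul]
    rw [hLapp, smul_conv t H, smul_conv2 τ t (P * H * P)]
  rw [this, norm_mul]
  have hI : ‖ -Complex.I‖ = 1 := by simp
  rw [hI, one_mul]
  exact hb t

end Normed

end Stmt12Aux

set_option maxHeartbeats 1000000 in
/-- First-order error estimate for the effective-Hamiltonian comparison: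
`|tr[e^{iτH}·O·(e^{−iτH} − e^{−iτH̃})·ρ]|` is bounded by the Cauchy–Schwarz
term on the `Π^⊥`-component plus the Duhamel integral term, where
`H̃ = ΠHΠ` and `Π^⊥ = 1 − Π`. -/
theorem stmt_12 {n : ℕ} (τ : ℝ) (hτ : 0 ≤ τ)
    (H P H₀ ρ O : Matrix (Fin n) (Fin n) ℂ)
    (hH : H.IsHermitian)
    (hP2 : P * P = P) (hPH : Pᴴ = P)
    (hcomm : (H - H₀) * P = P * (H - H₀))
    (hρ : ρ.PosSemidef) (hO : O.IsHermitian) :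
    ‖((NormedSpace.exp ((Complex.I * (τ : ℂ)) • H) * O *
            (NormedSpace.exp ((-(Complex.I * (τ : ℂ))) • H)
              - NormedSpace.exp ((-(Complex.I * (τ : ℂ))) • (P * H * P))) *
            ρ).trace)‖
      ≤ frobNorm (((1 : Matrix (Fin n) (Fin n) ℂ) - P) * hρ.sqrt) *
          (frobNorm (((1 : Matrix (Fin n) (Fin n) ℂ) - P)
              * NormedSpace.exp ((Complex.I * (τ : ℂ)) • H) * O
              * NormedSpace.exp ((-(Complex.I * (τ : ℂ))) • H) * hρ.sqrt)
            + frobNorm (((1 : Matrix (Fin n) (Fin n) ℂ) - P) * O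
              * NormedSpace.exp ((-(Complex.I * (τ : ℂ))) • H) * hρ.sqrt))
        + ∫ τ₁ in (0:ℝ)..τ,
            frobNorm (hρ.sqrt
                * NormedSpace.exp ((Complex.I * (τ : ℂ)) • H) * O
                * NormedSpace.exp ((-(Complex.I * (τ₁ : ℂ))) • H)
                * ((1 : Matrix (Fin n) (Fin n) ℂ) - P))
              * frobNorm (((1 : Matrix (Fin n) (Fin n) ℂ) - P) * H₀ * P
                * NormedSpace.exp
                    ((-(Complex.I * ((τ : ℂ) - (τ₁ : ℂ)))) • (P * H * P))
                * hρ.sqrt) := by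
  classical
  set S : Matrix (Fin n) (Fin n) ℂ := hρ.sqrt with hSdef
  set Q : Matrix (Fin n) (Fin n) ℂ := (1 : Matrix (Fin n) (Fin n) ℂ) - P with hQdef
  set U : Matrix (Fin n) (Fin n) ℂ := NormedSpace.exp ((Complex.I * (τ : ℂ)) • H) with hUdef
  set V : Matrix (Fin n) (Fin n) ℂ := NormedSpace.exp ((-(Complex.I * (τ : ℂ))) • H) with hVdef
  set W : Matrix (Fin n) (Fin n) ℂ :=
    NormedSpace.exp ((-(Complex.I * (τ : ℂ))) • (P * H * P)) with hWdef
  have hSS : S * S = ρ := Stmt12Aux.psd_sqrt_mul_self hρ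
  have hSH : Sᴴ = S := Stmt12Aux.psd_sqrt_herm hρ
  have hQ2 : Q * Q = Q := by
    rw [hQdef, sub_mul, one_mul, mul_sub, mul_one, hP2, sub_self, sub_zero]
  have hQH : Qᴴ = Q := by
    rw [hQdef, Matrix.conjTranspose_sub, Matrix.conjTranspose_one, hPH]
  have hstar : ∀ t : ℝ, star (Complex.I * (t : ℂ)) = -(Complex.I * (t : ℂ)) := by
    intro t
    rw [Complex.star_def, map_mul, Complex.conj_I, Complex.conj_ofReal]
    ring
  have hstar' : ∀ t : ℝ, star (-(Complex.I * (t : ℂ))) = Complex.I * (t : ℂ) := by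
    intro t
    rw [star_neg, hstar, neg_neg]
  have hUad : Uᴴ = V := by
    rw [hUdef, hVdef, ← Matrix.exp_conjTranspose, Matrix.conjTranspose_smul, hstar, hH.eq]
  have hVad : Vᴴ = U := by
    rw [hUdef, hVdef, ← Matrix.exp_conjTranspose, Matrix.conjTranspose_smul, hstar', hH.eq]
  have hPQ0 : P * Q = 0 := by rw [hQdef, mul_sub, mul_one, hP2, sub_self]
  have hWQ : W * Q = Q := by
    refine Stmt12Aux.exp_mul_eq_of_mul_eq_zero _ _ ?_
    have h1 : P * H * P * Q = P * H * (P * Q) := by noncomm_ring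
    rw [smul_mul_assoc, h1, hPQ0, mul_zero, smul_zero]
  set g : ℝ → ℝ := fun t =>
    frobNorm (S * U * O * NormedSpace.exp ((-(Complex.I * (t : ℂ))) • H) * Q)
      * frobNorm (Q * H₀ * P
          * NormedSpace.exp ((-(Complex.I * ((τ : ℂ) - (t : ℂ)))) • (P * H * P)) * S) with hgdef
  clear_value S Q U V W
  -- trace decomposition
  have hVW : V - W = V * Q - Q + (V * P - W * P) := by
    have h1 : Q + P = (1 : Matrix (Fin n) (Fin n) ℂ) := by rw [hQdef]; abel
    calc V - W = V * (Q + P) - W * (Q + P) := by rw [h1, mul_one, mul_one]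
      _ = V * Q - Q + (V * P - W * P) := by rw [mul_add, mul_add, hWQ]; abel
  have hcyc : ∀ X Y : Matrix (Fin n) (Fin n) ℂ,
      ((X * Y) * ρ).trace = ((S * X * Y) * S).trace := by
    intro X Y
    rw [← hSS, show (X * Y) * (S * S) = ((X * Y) * S) * S by noncomm_ring,
      Matrix.trace_mul_comm]
    congr 1
    noncomm_ring
  have ht1 : ((U * O * (V * Q)) * ρ).trace = ((S * U * O * V * Q) * (Q * S)).trace := by
    rw [hcyc (U * O) (V * Q)]
    congr 1
    rw [show (S * U * O * V * Q) * (Q * S) = S * U * O * V * (Q * Q) * S by noncomm_ring, hQ2]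
    noncomm_ring
  have ht2 : ((U * O * Q) * ρ).trace = ((S * U * O * Q) * (Q * S)).trace := by
    rw [hcyc (U * O) Q]
    congr 1
    rw [show (S * U * O * Q) * (Q * S) = S * U * O * (Q * Q) * S by noncomm_ring, hQ2]
    noncomm_ring
  have hsplit : (U * O * (V - W) * ρ).trace
      = ((S * U * O * V * Q) * (Q * S)).trace - ((S * U * O * Q) * (Q * S)).trace
        + (((U * O) * (V * P - W * P)) * ρ).trace := by
    rw [hVW, show U * O * (V * Q - Q + (V * P - W * P)) * ρ
        = (U * O * (V * Q)) * ρ - (U * O * Q) * ρ + ((U * O) * (V * P - W * P)) * ρ from by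
      noncomm_ring]
    rw [Matrix.trace_add, Matrix.trace_sub, ht1, ht2]
  -- bounds for the first two terms
  have hb1 : ‖ ((S * U * O * V * Q) * (Q * S)).trace‖
      ≤ frobNorm (Q * U * O * V * S) * frobNorm (Q * S) := by
    refine le_trans (Stmt12Aux.cs _ _) ?_
    have had : (Q * U * O * V * S)ᴴ = S * U * O * V * Q := by
      simp only [Matrix.conjTranspose_mul, hQH, hUad, hVad, hSH, hO.eq]
      noncomm_ring
    rw [← had, Stmt12Aux.frobNorm_conjTranspose]
  have hb2 : ‖ ((S * U * O * Q) * (Q * S)).trace‖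
      ≤ frobNorm (Q * O * V * S) * frobNorm (Q * S) := by
    refine le_trans (Stmt12Aux.cs _ _) ?_
    have had : (Q * O * V * S)ᴴ = S * U * O * Q := by
      simp only [Matrix.conjTranspose_mul, hQH, hVad, hSH, hO.eq]
      noncomm_ring
    rw [← had, Stmt12Aux.frobNorm_conjTranspose]
  have hgc : Continuous g := by
    rw [hgdef]
    refine Continuous.mul ?_ ?_
    · refine Stmt12Aux.continuous_frobNorm_comp ?_
      have hrw : (fun t : ℝ => S * U * O * NormedSpace.exp ((-(Complex.I * (t : ℂ))) • H) * Q)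
          = fun t : ℝ => S * U * O * NormedSpace.exp (t • ((-Complex.I) • H)) * Q := by
        funext t; rw [Stmt12Aux.smul_conv]
      rw [hrw]
      exact (continuous_const.mul (Stmt12Aux.continuous_exp_real _)).mul continuous_const
    · refine Stmt12Aux.continuous_frobNorm_comp ?_
      have hrw : (fun t : ℝ => Q * H₀ * P
            * NormedSpace.exp ((-(Complex.I * ((τ : ℂ) - (t : ℂ)))) • (P * H * P)) * S)
          = fun t : ℝ => Q * H₀ * P
            * NormedSpace.exp ((τ - t) • ((-Complex.I) • (P * H * P))) * S := by
        funext t; rw [Stmt12Aux.smul_conv2]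
      rw [hrw]
      exact (continuous_const.mul
        ((Stmt12Aux.continuous_exp_real _).comp (continuous_const.sub continuous_id))).mul continuous_const
  have hb : ∀ t : ℝ,
      ‖
        ((U * O) * (NormedSpace.exp ((-(Complex.I * (t : ℂ))) • H) * (((1 : Matrix (Fin n) (Fin n) ℂ) - P) * H₀ * P) * NormedSpace.exp ((-(Complex.I * ((τ : ℂ) - (t : ℂ)))) • (P * H * P))) * ρ).trace‖
      ≤ g t := by
    intro t
    rw [← hQdef]
    set Vt := NormedSpace.exp ((-(Complex.I * (t : ℂ))) • H) with hVt
    set Ws := NormedSpace.exp ((-(Complex.I * ((τ : ℂ) - (t : ℂ)))) • (P * H * P)) with hWs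
    have he : (((U * O) * (Vt * (Q * H₀ * P) * Ws)) * ρ).trace
        = ((S * U * O * Vt * Q) * (Q * H₀ * P * Ws * S)).trace := by
      rw [hcyc (U * O) (Vt * (Q * H₀ * P) * Ws)]
      congr 1
      rw [show (S * U * O * Vt * Q) * (Q * H₀ * P * Ws * S)
          = S * U * O * Vt * (Q * Q) * H₀ * P * Ws * S by noncomm_ring, hQ2]
      noncomm_ring
    rw [he, hgdef]
    exact Stmt12Aux.cs _ _
  have hb3 : ‖ (((U * O) * (V * P - W * P)) * ρ).trace‖
      ≤ ∫ t in (0:ℝ)..τ, g t := by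
    rw [hVdef, hWdef]
    refine Stmt12Aux.T3bound τ hτ H P H₀ (U * O) ρ hP2 hcomm g hgc ?_
    intro t
    exact hb t
  -- put everything together
  have habs : ∀ z : ℂ, ‖z‖ = ‖z‖ := fun z => rfl
  calc ‖ (U * O * (V - W) * ρ).trace‖
      = ‖ ((S * U * O * V * Q) * (Q * S)).trace
          - ((S * U * O * Q) * (Q * S)).trace
          + (((U * O) * (V * P - W * P)) * ρ).trace‖ := by rw [hsplit]
    _ ≤ ‖ ((S * U * O * V * Q) * (Q * S)).trace
          - ((S * U * O * Q) * (Q * S)).trace‖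
        + ‖ (((U * O) * (V * P - W * P)) * ρ).trace‖ := by
        rw [habs, habs, habs]; exact norm_add_le _ _
    _ ≤ (‖ ((S * U * O * V * Q) * (Q * S)).trace‖
          + ‖ ((S * U * O * Q) * (Q * S)).trace‖)
        + ‖ (((U * O) * (V * P - W * P)) * ρ).trace‖ := by
        gcongr ?_ + _
        rw [habs, habs, habs]; exact norm_sub_le _ _
    _ ≤ (frobNorm (Q * U * O * V * S) * frobNorm (Q * S)
          + frobNorm (Q * O * V * S) * frobNorm (Q * S))
        + ∫ t in (0:ℝ)..τ, g t := by
        exact add_le_add (add_le_add hb1 hb2) hb3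
    _ = frobNorm (Q * S) * (frobNorm (Q * U * O * V * S) + frobNorm (Q * O * V * S))
        + ∫ t in (0:ℝ)..τ, g t := by ring
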